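/- For all integers n ≥ k ≥ 3 and 3 ≤ r ≤ k, the number of collinear r-tuples of points in the grid [n]^k is at most (k·2^{r+k}/r!)·n^{2k}. -/

import Mathlib

open Finset

namespace CollinearGridAux

variable {k : ℕ}

def toR (x : Fin k → ℤ) : Fin k → ℝ := fun i => (x i : ℝ)

lemma toR_injective : Function.Injective (toR (k := k)) := by
  intro x y h
  funext i
  have := congrFun h i
  simpa [toR] using this

noncomputable def grid (n k : ℕ) : Finset (Fin k → ℤ) := Fintype.piFinset fun _ => Finset.Icc 1 (n : ℤ)

lemma mem_grid {n : ℕ} {x : Fin k → ℤ} : x ∈ grid n k ↔ ∀ i, 1 ≤ x i ∧ x i ≤ n := by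
  simp [grid, Fintype.mem_piFinset]

open Classical in
noncomputable def interior (n : ℕ) (a c : Fin k → ℤ) : Finset (Fin k → ℤ) :=
  (grid n k).filter fun x => x ≠ a ∧ x ≠ c ∧ toR x ∈ openSegment ℝ (toR a) (toR c)

lemma mem_interior {n : ℕ} {a c x : Fin k → ℤ} :
    x ∈ interior n a c ↔ x ∈ grid n k ∧ x ≠ a ∧ x ≠ c ∧
      toR x ∈ openSegment ℝ (toR a) (toR c) := by
  classical
  simp [interior]

lemma interior_comm (n : ℕ) (a c : Fin k → ℤ) : interior n a c = interior n c a := by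
  classical
  ext x
  rw [mem_interior, mem_interior, openSegment_symm]
  tauto

lemma interior_spacing_aux {n : ℕ} {a c : Fin k → ℤ} (ha : a ∈ grid n k) (hc : c ∈ grid n k)
    {j : Fin k} (hj : a j < c j) :
    (∀ i, ((interior n a c).card + 1 : ℤ) ∣ (c i - a i)) ∧ (interior n a c).card + 2 ≤ n := by
  classical
  set d : Fin k → ℤ := fun i => c i - a i with hd
  have hdj : 0 < d j := by simp only [hd]; omega
  set Hz : AddSubgroup ℤ :=
    { carrier := {t | ∀ i, d j ∣ t * d i}
      add_mem' := by
        intro s t hs ht i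
        have : d j ∣ s * d i + t * d i := dvd_add (hs i) (ht i)
        simpa [add_mul] using this
      zero_mem' := by intro i; simp
      neg_mem' := by
        intro s hs i
        simpa [neg_mul] using (dvd_neg.mpr (hs i)) } with hHz
  have hdjHz : d j ∈ Hz := fun i => Dvd.intro _ rfl
  obtain ⟨u₀, hu₀⟩ := Int.subgroup_cyclic Hz
  have hgen : ∀ t : ℤ, t ∈ Hz ↔ ∃ w : ℤ, w * u₀ = t := by
    intro t
    rw [hu₀, AddSubgroup.mem_closure_singleton]
    simp [zsmul_eq_mul]
  have hu₀ne : u₀ ≠ 0 := by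
    rintro rfl
    obtain ⟨w, hw⟩ := (hgen (d j)).mp hdjHz
    omega
  set u : ℤ := |u₀| with hu
  have hupos : 0 < u := abs_pos.mpr hu₀ne
  have hgenu : ∀ t : ℤ, t ∈ Hz ↔ ∃ w : ℤ, w * u = t := by
    intro t
    rw [hgen t]
    rcases abs_choice u₀ with h | h
    · rw [hu, h]
    · constructor
      · rintro ⟨w, rfl⟩; exact ⟨-w, by rw [hu, h]; ring⟩
      · rintro ⟨w, rfl⟩; exact ⟨-w, by rw [hu, h]; ring⟩
  have huHz : u ∈ Hz := (hgenu u).mpr ⟨1, one_mul u⟩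
  obtain ⟨m, hm⟩ := (hgenu (d j)).mp hdjHz
  have hmpos : 0 < m := by nlinarith [hm, hdj, hupos]
  set e : Fin k → ℤ := fun i => u * d i / d j with he
  have hediv : ∀ i, e i * d j = u * d i := by
    intro i
    rw [he]
    rw [mul_comm (u * d i / d j) (d j)]
    exact Int.mul_ediv_cancel' (huHz i)
  have hme : ∀ i, m * e i = d i := by
    intro i
    have h1 : (m * e i) * d j = d i * d j := by
      calc (m * e i) * d j = m * (e i * d j) := by ring
        _ = m * (u * d i) := by rw [hediv i]
        _ = (m * u) * d i := by ring
        _ = d i * d j := by rw [hm]; ring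
    exact mul_right_cancel₀ hdj.ne' h1
  have hej : e j = u := mul_right_cancel₀ hdj.ne' (hediv j)
  have hagrid := mem_grid.mp ha
  have hcgrid := mem_grid.mp hc
  have hcai : ∀ i, c i = a i + m * e i := by
    intro i
    have := hme i
    simp only [hd] at this
    omega
  have hIF : interior n a c = (Finset.Ioo (0:ℤ) m).image (fun t => fun i => a i + t * e i) := by
    ext x
    rw [mem_interior]
    simp only [Finset.mem_image, Finset.mem_Ioo]
    constructor
    · rintro ⟨hxg, hxa, hxc, hseg⟩
      rw [openSegment_eq_image] at hseg
      obtain ⟨s, hs01, hsx⟩ := hseg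
      have hsx' : ∀ i, (x i : ℝ) = a i + s * d i := by
        intro i
        have := congrFun hsx i
        simp only [toR, Pi.add_apply, Pi.smul_apply, smul_eq_mul] at this
        rw [← this]
        push_cast [hd]
        ring
      set t' : ℤ := x j - a j with ht'
      have hst' : s * (d j : ℝ) = (t' : ℝ) := by
        have := hsx' j
        push_cast [ht'] at *
        linarith
      obtain ⟨hs0, hs1⟩ := hs01
      have hdjR : (0:ℝ) < (d j : ℝ) := by exact_mod_cast hdj
      have ht'pos : 0 < t' := by
        have : (0:ℝ) < (t' : ℝ) := by rw [← hst']; positivity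
        exact_mod_cast this
      have ht'lt : t' < d j := by
        have : (t' : ℝ) < (d j : ℝ) := by rw [← hst']; nlinarith
        exact_mod_cast this
      have ht'Hz : t' ∈ Hz := by
        intro i
        refine ⟨x i - a i, ?_⟩
        have hreal : ((t' * d i : ℤ) : ℝ) = ((d j * (x i - a i) : ℤ) : ℝ) := by
          push_cast
          rw [← hst']
          nlinarith [hsx' i]
        exact_mod_cast hreal
      obtain ⟨t, htu⟩ := (hgenu t').mp ht'Hz
      have htpos : 0 < t := by nlinarith
      have htltm : t < m := by nlinarith
      refine ⟨t, ⟨htpos, htltm⟩, ?_⟩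
      funext i
      have h1 : (x i - a i) * d j = t' * d i := by
        obtain ⟨w, hw⟩ := ht'Hz i
        have hreal : ((x i - a i) * d j : ℤ) = ((t' * d i : ℤ)) := by
          have : (((x i - a i) * d j : ℤ) : ℝ) = ((t' * d i : ℤ) : ℝ) := by
            push_cast
            rw [← hst']
            nlinarith [hsx' i]
          exact_mod_cast this
        exact hreal
      have h2 : (t * e i) * d j = t' * d i := by
        calc (t * e i) * d j = t * (e i * d j) := by ring
          _ = t * (u * d i) := by rw [hediv i]
          _ = (t * u) * d i := by ring
          _ = t' * d i := by rw [htu]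
      have h3 := mul_right_cancel₀ hdj.ne' (h1.trans h2.symm)
      omega
    · rintro ⟨t, ⟨ht0, htm⟩, rfl⟩
      refine ⟨?_, ?_, ?_, ?_⟩
      · rw [mem_grid]
        intro i
        rcases le_or_gt 0 (e i) with hei | hei
        · constructor
          · nlinarith [(hagrid i).1, mul_nonneg ht0.le hei]
          · have h4 : a i + t * e i ≤ a i + m * e i := by
              nlinarith [mul_nonneg (sub_nonneg.mpr htm.le) hei]
            rw [← hcai i] at h4
            exact le_trans h4 (hcgrid i).2
        · constructor
          · have h4 : a i + m * e i ≤ a i + t * e i := by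
              nlinarith [mul_nonpos_of_nonneg_of_nonpos (sub_nonneg.mpr htm.le) hei.le]
            rw [← hcai i] at h4
            exact le_trans (hcgrid i).1 h4
          · nlinarith [(hagrid i).2, mul_pos ht0 (neg_pos.mpr hei)]
      · intro hfa
        have h5 := congrFun hfa j
        simp only [hej] at h5
        nlinarith [mul_pos ht0 hupos]
      · intro hfc
        have h5 := congrFun hfc j
        rw [hcai j, hej] at h5
        have h6 : t = m := mul_right_cancel₀ hupos.ne' (by linarith)
        exact absurd h6 (ne_of_lt htm)
      · rw [openSegment_eq_image]
        have hmR : (0:ℝ) < (m:ℝ) := by exact_mod_cast hmpos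
        refine ⟨(t:ℝ)/(m:ℝ), ⟨by positivity, ?_⟩, ?_⟩
        · rw [div_lt_one hmR]; exact_mod_cast htm
        · funext i
          simp only [toR, Pi.add_apply, Pi.smul_apply, smul_eq_mul]
          have : c i = a i + m * e i := hcai i
          rw [this]
          push_cast
          field_simp
          ring
  have hinj : Set.InjOn (fun t : ℤ => fun i => a i + t * e i) (Finset.Ioo (0:ℤ) m) := by
    intro t₁ _ t₂ _ hf
    have h5 := congrFun hf j
    simp only [hej] at h5
    exact mul_right_cancel₀ hupos.ne' (by linarith)
  have hcard : ((interior n a c).card : ℤ) = m - 1 := by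
    rw [hIF, Finset.card_image_of_injOn hinj, Int.card_Ioo]
    omega
  constructor
  · intro i
    refine ⟨e i, ?_⟩
    rw [hcard, show (m - 1 + 1 : ℤ) = m by ring]
    have h7 : m * e i = c i - a i := by simpa [hd] using hme i
    exact h7.symm
  · -- m + 1 ≤ n via j-coordinates
    have himg : (Finset.Icc (0:ℤ) m).image (fun t => a j + t * u) ⊆ Finset.Icc 1 (n:ℤ) := by
      intro y hy
      simp only [Finset.mem_image, Finset.mem_Icc] at hy ⊢
      obtain ⟨t, ⟨ht0, htm⟩, rfl⟩ := hy
      constructor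
      · nlinarith [(hagrid j).1, mul_nonneg ht0 hupos.le]
      · have h4 : a j + t * u ≤ a j + m * u := by
          nlinarith [mul_nonneg (sub_nonneg.mpr htm) hupos.le]
        rw [hm] at h4
        have hcj := (hcgrid j).2
        simp only [hd] at h4
        omega
    have hinj2 : Set.InjOn (fun t : ℤ => a j + t * u) (Finset.Icc (0:ℤ) m) := by
      intro t₁ _ t₂ _ hf
      simp only at hf
      exact mul_right_cancel₀ hupos.ne' (by linarith)
    have h1 : ((Finset.Icc (0:ℤ) m).image (fun t => a j + t * u)).card ≤ (Finset.Icc 1 (n:ℤ)).card :=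
      Finset.card_le_card himg
    rw [Finset.card_image_of_injOn hinj2, Int.card_Icc, Int.card_Icc] at h1
    omega
lemma interior_spacing {n : ℕ} {a c : Fin k → ℤ} (ha : a ∈ grid n k) (hc : c ∈ grid n k)
    (hne : a ≠ c) :
    (∀ i, ((interior n a c).card + 1 : ℤ) ∣ (c i - a i)) ∧ (interior n a c).card + 2 ≤ n := by
  have hex : ∃ j, a j ≠ c j := by
    by_contra h; push_neg at h; exact hne (funext h)
  obtain ⟨j, hj⟩ := hex
  rcases lt_or_gt_of_ne hj with h | h
  · exact interior_spacing_aux ha hc h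
  · have h0 := interior_spacing_aux hc ha h
    rw [interior_comm n a c]
    exact ⟨fun i => by simpa [neg_sub] using dvd_neg.mpr (h0.1 i), h0.2⟩

lemma exists_extremes {T' : Finset (Fin k → ℤ)} (hcard : 2 ≤ T'.card)
    (hcol : Collinear ℝ (toR '' (↑T' : Set (Fin k → ℤ)))) :
    ∃ a ∈ T', ∃ c ∈ T', a ≠ c ∧ ∀ x ∈ T', x ≠ a → x ≠ c →
      toR x ∈ openSegment ℝ (toR a) (toR c) := by
  classical
  obtain ⟨p₀, v, hpv⟩ := (collinear_iff_exists_forall_eq_smul_vadd _).mp hcol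
  set f : (Fin k → ℤ) → ℝ := fun x =>
    if hx : toR x ∈ toR '' (↑T' : Set (Fin k → ℤ)) then (hpv _ hx).choose else 0 with hfdef
  have hf : ∀ x ∈ T', toR x = f x • v + p₀ := by
    intro x hx
    have hmem : toR x ∈ toR '' (↑T' : Set (Fin k → ℤ)) := ⟨x, hx, rfl⟩
    have := (hpv _ hmem).choose_spec
    simp only [hfdef, dif_pos hmem]
    simpa [vadd_eq_add] using this
  obtain ⟨x₀, hx₀, y₀, hy₀, hxy₀⟩ := Finset.one_lt_card.mp hcard
  have hvne : v ≠ 0 := by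
    rintro rfl
    apply hxy₀
    apply toR_injective
    rw [hf x₀ hx₀, hf y₀ hy₀]
    simp
  have hfinj : ∀ x ∈ T', ∀ y ∈ T', f x = f y → x = y := by
    intro x hx y hy hfxy
    apply toR_injective
    rw [hf x hx, hf y hy, hfxy]
  have hne : T'.Nonempty := ⟨x₀, hx₀⟩
  obtain ⟨a, haT, hamin⟩ := T'.exists_min_image f hne
  obtain ⟨c, hcT, hcmax⟩ := T'.exists_max_image f hne
  have hfac : f a < f c := by
    rcases lt_or_ge (f a) (f c) with h | h
    · exact h
    · exfalso
      have h1 : f a = f c := le_antisymm (hamin c hcT) (by linarith [hcmax a haT])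
      apply hxy₀
      have hx0 : f x₀ = f a := le_antisymm (by linarith [hcmax x₀ hx₀, h1.symm.le]) (hamin x₀ hx₀)
      have hy0 : f y₀ = f a := le_antisymm (by linarith [hcmax y₀ hy₀, h1.symm.le]) (hamin y₀ hy₀)
      exact hfinj x₀ hx₀ y₀ hy₀ (hx0.trans hy0.symm)
  have hac : a ≠ c := fun h => absurd (congrArg f h) (ne_of_lt hfac)
  refine ⟨a, haT, c, hcT, hac, ?_⟩
  intro x hx hxa hxc
  have hfx1 : f a < f x :=
    lt_of_le_of_ne (hamin x hx) (fun h => hxa (hfinj x hx a haT h.symm).symm.symm)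
  have hfx2 : f x < f c :=
    lt_of_le_of_ne (hcmax x hx) (fun h => hxc (hfinj x hx c hcT h))
  rw [openSegment_eq_image]
  have hca : f c - f a ≠ 0 := by linarith
  refine ⟨(f x - f a) / (f c - f a), ⟨div_pos (by linarith) (by linarith), by rw [div_lt_one (by linarith)]; linarith⟩, ?_⟩
  rw [hf x hx, hf a haT, hf c hcT]
  funext i
  simp only [Pi.add_apply, Pi.smul_apply, smul_eq_mul, Pi.sub_apply]
  field_simp
  ring
lemma card_dvd_pairs_le (n q : ℕ) (hq : 0 < q) :
    ((((grid n k) ×ˢ (grid n k)).filter fun p => ∀ i, (q:ℤ) ∣ (p.2 i - p.1 i)).card : ℕ)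
      ≤ (n * ((n-1)/q + 1))^k := by
  classical
  set P1 : Finset (ℤ × ℤ) :=
    ((Finset.Icc (1:ℤ) n) ×ˢ (Finset.Icc (1:ℤ) n)).filter (fun p => (q:ℤ) ∣ p.2 - p.1) with hP1
  have step1 : ((((grid n k) ×ˢ (grid n k)).filter
      fun p => ∀ i, (q:ℤ) ∣ (p.2 i - p.1 i)).card : ℕ) ≤ (Fintype.piFinset fun _ : Fin k => P1).card := by
    apply Finset.card_le_card_of_injOn (fun p => fun i => (p.1 i, p.2 i))
    · intro p hp
      simp only [Finset.mem_coe, Finset.mem_filter, Finset.mem_product] at hp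
      obtain ⟨⟨h1, h2⟩, h3⟩ := hp
      rw [Finset.mem_coe, Fintype.mem_piFinset]
      intro i
      simp only [hP1, Finset.mem_filter, Finset.mem_product]
      exact ⟨⟨Finset.mem_Icc.mpr (mem_grid.mp h1 i), Finset.mem_Icc.mpr (mem_grid.mp h2 i)⟩, h3 i⟩
    · intro p _ p' _ hpp
      have h1 : ∀ i, p.1 i = p'.1 i ∧ p.2 i = p'.2 i := by
        intro i
        have := congrFun hpp i
        exact ⟨congrArg Prod.fst this, congrArg Prod.snd this⟩
      exact Prod.ext (funext fun i => (h1 i).1) (funext fun i => (h1 i).2)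
  have step2 : (Fintype.piFinset fun _ : Fin k => P1).card = P1.card ^ k := by
    rw [Fintype.card_piFinset]
    simp
  have step3 : P1.card ≤ n * ((n-1)/q + 1) := by
    set L : ℕ := (n-1)/q with hL
    have hsub : P1 ⊆ (Finset.Icc (1:ℤ) n).biUnion (fun x =>
        ((Finset.Icc (-((x-1)/(q:ℤ))) (-((x-1)/(q:ℤ)) + L)).image (fun t => x + q * t)).image
          (fun y => (x, y))) := by
      intro p hp
      simp only [hP1, Finset.mem_filter, Finset.mem_product, Finset.mem_Icc] at hp
      obtain ⟨⟨⟨hx1, hxn⟩, ⟨hy1, hyn⟩⟩, hdvd⟩ := hp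
      obtain ⟨x, y⟩ := p
      simp only at hx1 hxn hy1 hyn hdvd
      have hn1 : (1:ℤ) ≤ n := le_trans hx1 hxn
      rw [Finset.mem_biUnion]
      refine ⟨x, by simp [Finset.mem_Icc]; omega, ?_⟩
      rw [Finset.mem_image]
      set t : ℤ := (y - x) / q with ht
      have hqt : (q:ℤ) * t = y - x := Int.mul_ediv_cancel' hdvd
      have hq0 : (0:ℤ) < q := by exact_mod_cast hq
      have hfloor : ((x-1)/(q:ℤ)) * q ≤ x - 1 := by
        have h1 := Int.mul_ediv_add_emod (x-1) q
        have h2 := Int.emod_nonneg (x-1) (by omega : (q:ℤ) ≠ 0)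
        have h3 : ((x-1)/(q:ℤ)) * q = q * ((x-1)/(q:ℤ)) := mul_comm _ _
        omega
      have htlo : -((x-1)/(q:ℤ)) ≤ t := by
        rw [neg_le]
        rw [Int.le_ediv_iff_mul_le hq0]
        have h4 : -t * (q:ℤ) = -((q:ℤ) * t) := by ring
        omega
      have hLcast : (L : ℤ) = ((n-1:ℕ):ℤ) / (q:ℤ) := by
        rw [hL]; exact Int.natCast_ediv _ _
      have hthi : t ≤ -((x-1)/(q:ℤ)) + L := by
      -- (t - t₁) * q ≤ n - 1 where t₁ = -((x-1)/q)
        have hn1' : ((n-1:ℕ):ℤ) = (n:ℤ) - 1 := by omega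
        have key : (t + ((x-1)/(q:ℤ))) * q ≤ ((n-1:ℕ):ℤ) := by
          have h5 : (t + ((x-1)/(q:ℤ))) * q = (q:ℤ) * t + ((x-1)/(q:ℤ)) * q := by ring
          omega
        have h6 := (Int.le_ediv_iff_mul_le hq0).mpr key
        linarith [hLcast]
      refine ⟨y, ?_, rfl⟩
      rw [Finset.mem_image]
      exact ⟨t, Finset.mem_Icc.mpr ⟨htlo, hthi⟩, by omega⟩
    calc P1.card ≤ _ := Finset.card_le_card hsub
      _ ≤ ∑ x ∈ Finset.Icc (1:ℤ) n, (((Finset.Icc (-((x-1)/(q:ℤ))) (-((x-1)/(q:ℤ)) + L)).image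
          (fun t => x + q * t)).image (fun y => ((x:ℤ), y))).card := Finset.card_biUnion_le
      _ ≤ ∑ x ∈ Finset.Icc (1:ℤ) n, (L + 1) := by
          apply Finset.sum_le_sum
          intro x _
          calc _ ≤ _ := Finset.card_image_le
            _ ≤ _ := Finset.card_image_le
            _ ≤ L + 1 := by
                rw [Int.card_Icc, show (-((x-1)/(q:ℤ)) + L + 1 - -((x-1)/(q:ℤ))) = ((L+1:ℕ):ℤ) by push_cast; ring, Int.toNat_natCast]
      _ = n * (L + 1) := by
          rw [Finset.sum_const, Int.card_Icc, smul_eq_mul]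
          congr 1
          omega
  calc _ ≤ _ := step1
    _ = P1.card ^ k := step2
    _ ≤ (n * ((n-1)/q + 1))^k := Nat.pow_le_pow_left step3 k
lemma ncard_S_le (n k r : ℕ) (hr : 3 ≤ r) :
    ({T : Finset (Fin k → ℝ) |
        (∀ x ∈ T, ∀ i, ∃ m : ℕ, 1 ≤ m ∧ m ≤ n ∧ x i = m) ∧
        T.card = r ∧ Collinear ℝ (↑T : Set (Fin k → ℝ))}.ncard)
      ≤ ∑ p ∈ (grid n k) ×ˢ (grid n k), ((interior n p.1 p.2).card.choose (r-2)) := by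
  classical
  set S : Set (Finset (Fin k → ℝ)) := {T : Finset (Fin k → ℝ) |
        (∀ x ∈ T, ∀ i, ∃ m : ℕ, 1 ≤ m ∧ m ≤ n ∧ x i = m) ∧
        T.card = r ∧ Collinear ℝ (↑T : Set (Fin k → ℝ))} with hS
  set F : Finset ((Fin k → ℤ) × (Fin k → ℤ) × Finset (Fin k → ℤ)) :=
    ((grid n k) ×ˢ (grid n k)).biUnion
      (fun p => ((interior n p.1 p.2).powersetCard (r-2)).image (fun R => (p.1, p.2, R))) with hF
  have key : ∀ T ∈ S, ∃ y : (Fin k → ℤ) × (Fin k → ℤ) × Finset (Fin k → ℤ),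
      y ∈ F ∧ T = (insert y.1 (insert y.2.1 y.2.2)).image toR := by
    intro T hT
    obtain ⟨hT1, hT2, hT3⟩ := hT
    set flr : (Fin k → ℝ) → (Fin k → ℤ) := fun x => fun i => ⌊x i⌋ with hflr
    set zT : Finset (Fin k → ℤ) := T.image flr with hzT
    have hfix : ∀ x ∈ T, toR (flr x) = x := by
      intro x hx
      funext i
      obtain ⟨m, hm1, hm2, hm3⟩ := hT1 x hx i
      simp only [toR, hflr, hm3, Int.floor_natCast]
      push_cast
      rfl
    have himg : zT.image toR = T := by
      rw [hzT, Finset.image_image]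
      calc T.image (toR ∘ flr) = T.image id := Finset.image_congr (fun x hx => hfix x hx)
        _ = T := Finset.image_id
    have hzsub : zT ⊆ grid n k := by
      intro x' hx'
      rw [hzT, Finset.mem_image] at hx'
      obtain ⟨x, hx, rfl⟩ := hx'
      rw [mem_grid]
      intro i
      obtain ⟨m, hm1, hm2, hm3⟩ := hT1 x hx i
      simp only [hflr, hm3, Int.floor_natCast]
      exact ⟨by exact_mod_cast hm1, by exact_mod_cast hm2⟩
    have hzcard : zT.card = r := by
      rw [hzT]
      rw [Finset.card_image_of_injOn]
      · exact hT2
      · intro x hx y hy hxy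
        rw [← hfix x hx, ← hfix y hy, hxy]
    have hzcol : Collinear ℝ (toR '' (↑zT : Set (Fin k → ℤ))) := by
      rw [← Finset.coe_image, himg]
      exact hT3
    obtain ⟨a, haT, c, hcT, hac, hseg⟩ := exists_extremes (by omega) hzcol
    set R : Finset (Fin k → ℤ) := (zT.erase a).erase c with hR
    have hzeq : insert a (insert c R) = zT := by
      rw [hR]
      ext x
      simp only [Finset.mem_insert, Finset.mem_erase]
      constructor
      · rintro (rfl | rfl | ⟨_, _, h⟩) <;> first | exact haT | exact hcT | exact h
      · intro hx
        by_cases h1 : x = a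
        · exact Or.inl h1
        · by_cases h2 : x = c
          · exact Or.inr (Or.inl h2)
          · exact Or.inr (Or.inr ⟨h2, h1, hx⟩)
    refine ⟨(a, c, R), ?_, ?_⟩
    · rw [hF, Finset.mem_biUnion]
      refine ⟨(a, c), Finset.mem_product.mpr ⟨hzsub haT, hzsub hcT⟩, ?_⟩
      rw [Finset.mem_image]
      refine ⟨R, ?_, rfl⟩
      rw [Finset.mem_powersetCard]
      constructor
      · intro x hx
        rw [hR] at hx
        simp only [Finset.mem_erase] at hx
        obtain ⟨hxc, hxa, hxz⟩ := hx
        rw [mem_interior]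
        exact ⟨hzsub hxz, hxa, hxc, hseg x hxz hxa hxc⟩
      · have hcR : c ∈ zT.erase a := Finset.mem_erase.mpr ⟨Ne.symm hac, hcT⟩
        rw [hR, Finset.card_erase_of_mem hcR, Finset.card_erase_of_mem haT, hzcard]
        omega
    · rw [hzeq, himg]
  have hinj : S.ncard ≤ (↑F : Set ((Fin k → ℤ) × (Fin k → ℤ) × Finset (Fin k → ℤ))).ncard := by
    apply Set.ncard_le_ncard_of_injOn (fun T => if hT : T ∈ S then (key T hT).choose else default)
    · intro T hT
      simp only [dif_pos hT]
      exact Finset.mem_coe.mpr ((key T hT).choose_spec).1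
    · intro T1 h1 T2 h2 heq
      simp only [dif_pos h1, dif_pos h2] at heq
      rw [((key T1 h1).choose_spec).2, ((key T2 h2).choose_spec).2, heq]
  rw [Set.ncard_coe_finset] at hinj
  refine le_trans hinj ?_
  rw [hF]
  refine le_trans Finset.card_biUnion_le ?_
  apply Finset.sum_le_sum
  intro p _
  refine le_trans Finset.card_image_le ?_
  rw [Finset.card_powersetCard]
lemma regroup (n k r : ℕ) (hr : 3 ≤ r) :
    ∑ p ∈ (grid n k) ×ˢ (grid n k), ((interior n p.1 p.2).card.choose (r-2))
      ≤ ∑ q ∈ Finset.Icc 2 n, (q-1).choose (r-2) *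
          ((((grid n k) ×ˢ (grid n k)).filter
            fun p => ∀ i, (q:ℤ) ∣ (p.2 i - p.1 i)).card) := by
  classical
  have hper : ∀ p ∈ (grid n k) ×ˢ (grid n k),
      (interior n p.1 p.2).card.choose (r-2) ≤
      ∑ q ∈ Finset.Icc 2 n,
        if (∀ i, (q:ℤ) ∣ (p.2 i - p.1 i)) then (q-1).choose (r-2) else 0 := by
    intro p hp
    set B := (interior n p.1 p.2).card with hB
    by_cases hsmall : B < r - 2
    · rw [Nat.choose_eq_zero_of_lt hsmall]; exact Nat.zero_le _
    push_neg at hsmall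
    have hpne : p.1 ≠ p.2 := by
      intro h
      have hB0 : B = 0 := by
        rw [hB, Finset.card_eq_zero, Finset.eq_empty_iff_forall_notMem]
        intro x hx
        rw [mem_interior] at hx
        obtain ⟨_, hxa, hxc, hseg⟩ := hx
        rw [← h, openSegment_same] at hseg
        exact hxa (toR_injective (by simpa using hseg))
      omega
    rw [Finset.mem_product] at hp
    obtain ⟨hdvd, hle⟩ := interior_spacing hp.1 hp.2 hpne
    have hmem : B + 1 ∈ Finset.Icc 2 n := Finset.mem_Icc.mpr ⟨by omega, by omega⟩
    have hcond : ∀ i, (((B+1 : ℕ)):ℤ) ∣ (p.2 i - p.1 i) := by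
      intro i
      have := hdvd i
      push_cast
      push_cast at this
      exact this
    have hterm : (interior n p.1 p.2).card.choose (r-2) =
        if (∀ i, (((B+1:ℕ)):ℤ) ∣ (p.2 i - p.1 i)) then ((B+1)-1).choose (r-2) else 0 := by
      rw [if_pos hcond]
      congr 1
    rw [hterm]
    exact Finset.single_le_sum
      (f := fun q => if (∀ i, ((q:ℕ):ℤ) ∣ (p.2 i - p.1 i)) then (q-1).choose (r-2) else 0)
      (fun q _ => Nat.zero_le _) hmem
  calc _ ≤ _ := Finset.sum_le_sum hper
    _ = ∑ q ∈ Finset.Icc 2 n, ∑ p ∈ (grid n k) ×ˢ (grid n k),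
          (if (∀ i, (q:ℤ) ∣ (p.2 i - p.1 i)) then (q-1).choose (r-2) else 0) :=
        Finset.sum_comm
    _ ≤ _ := by
        apply Finset.sum_le_sum
        intro q _
        rw [← Finset.sum_filter, Finset.sum_const, smul_eq_mul, mul_comm]

lemma sum_inv_sq_le (n : ℕ) (hn : 1 ≤ n) :
    ∑ q ∈ Finset.Icc 2 n, (1:ℝ)/(q:ℝ)^2 ≤ 1 - 1/(n:ℝ) := by
  induction n, hn using Nat.le_induction with
  | base => norm_num [show Finset.Icc 2 1 = ∅ from Finset.Icc_eq_empty (by omega)]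
  | succ m hm ih =>
    rw [Finset.sum_Icc_succ_top (by omega : 2 ≤ m + 1)]
    have hm0 : (0:ℝ) < m := by exact_mod_cast hm
    have h1 : (1:ℝ)/(((m:ℝ))+1)^2 ≤ 1/(m:ℝ) - 1/((m:ℝ)+1) := by
      have h2 : (1:ℝ)/((m:ℝ))-1/((m:ℝ)+1) = 1/((m:ℝ)*((m:ℝ)+1)) := by
        field_simp
        ring
      rw [h2]
      apply one_div_le_one_div_of_le (by positivity)
      nlinarith
    push_cast
    push_cast at ih
    linarith

lemma D_le (n q : ℕ) (hq1 : 1 ≤ q) (hqn : q ≤ n) :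
    ((((grid n k) ×ˢ (grid n k)).filter
        fun p => ∀ i, (q:ℤ) ∣ (p.2 i - p.1 i)).card : ℝ)
      ≤ (2 * (n:ℝ)^2 / (q:ℝ))^k := by
  have h1 := card_dvd_pairs_le (k := k) n q (by omega)
  have h2 : ((((grid n k) ×ˢ (grid n k)).filter
      fun p => ∀ i, (q:ℤ) ∣ (p.2 i - p.1 i)).card : ℝ)
      ≤ (((n * ((n-1)/q + 1))^k : ℕ) : ℝ) := by exact_mod_cast h1
  refine le_trans h2 ?_
  rw [Nat.cast_pow]
  apply pow_le_pow_left₀ (by positivity)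
  have hn1 : 1 ≤ n := le_trans hq1 hqn
  have hq0 : (0:ℝ) < q := by exact_mod_cast hq1
  have hqn' : (q:ℝ) ≤ n := by exact_mod_cast hqn
  have hb1 : ((n * ((n-1)/q + 1) : ℕ) : ℝ) = (n:ℝ) * ((((n-1)/q : ℕ) : ℝ) + 1) := by
    push_cast; ring
  rw [hb1]
  have hb2 : (((n-1)/q : ℕ) : ℝ) ≤ ((n-1:ℕ):ℝ)/(q:ℝ) := Nat.cast_div_le
  have hb3 : ((n-1:ℕ):ℝ) = (n:ℝ) - 1 := by
    have : ((n-1:ℕ):ℝ) = ((n:ℕ):ℝ) - ((1:ℕ):ℝ) := by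
      rw [Nat.cast_sub hn1]
    simpa using this
  rw [hb3] at hb2
  have hb4 : (((n-1)/q : ℕ) : ℝ) + 1 ≤ 2*(n:ℝ)/(q:ℝ) := by
    have h5 : ((n:ℝ) - 1)/(q:ℝ) + 1 = ((n:ℝ) - 1 + q)/q := by field_simp
    have h6 : ((n:ℝ) - 1 + q)/q ≤ 2*(n:ℝ)/(q:ℝ) := by
      exact (div_le_div_iff_of_pos_right hq0).mpr (by linarith)
    linarith [hb2]
  calc (n:ℝ) * ((((n-1)/q : ℕ) : ℝ) + 1) ≤ (n:ℝ) * (2*(n:ℝ)/(q:ℝ)) := by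
        apply mul_le_mul_of_nonneg_left hb4 (by positivity)
    _ = 2 * (n:ℝ)^2 / (q:ℝ) := by ring

end CollinearGridAux
open CollinearGridAux in
/-- For `n ≥ k ≥ 3` and `3 ≤ r ≤ k`, the number of collinear `r`-element subsets of the
grid `[n]^k = {1,…,n}^k` is at most `(k·2^(r+k)/r!)·n^(2k)`. -/
theorem collinear_tuples_grid_bound_small_r (n k r : ℕ) (hk : 3 ≤ k) (hkn : k ≤ n)
    (hr3 : 3 ≤ r) (hrk : r ≤ k) :
    (({T : Finset (Fin k → ℝ) |
        (∀ x ∈ T, ∀ i, ∃ m : ℕ, 1 ≤ m ∧ m ≤ n ∧ x i = m) ∧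
        T.card = r ∧ Collinear ℝ (↑T : Set (Fin k → ℝ))}.ncard : ℝ))
      ≤ (k : ℝ) * 2 ^ (r + k) / (r.factorial : ℝ) * (n : ℝ) ^ (2 * k) := by
  classical
  have hn3 : 3 ≤ n := le_trans hk hkn
  obtain ⟨s, rfl⟩ : ∃ s, r = s + 2 := ⟨r - 2, by omega⟩
  have hn1 : 1 ≤ n := by omega
  have hsk : s + 2 ≤ k := hrk
  have hfacpos : (0:ℝ) < (s.factorial : ℝ) := by exact_mod_cast s.factorial_pos
  set M : ℝ := 2^k * (n:ℝ)^(2*k) / (s.factorial : ℝ) with hM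
  have hMnn : 0 ≤ M := by positivity
  have hterm : ∀ q ∈ Finset.Icc 2 n,
      (((q-1).choose s : ℕ) : ℝ) * (((((grid n k) ×ˢ (grid n k)).filter
        fun p => ∀ i, (q:ℤ) ∣ (p.2 i - p.1 i)).card : ℕ) : ℝ) ≤ M * (1/(q:ℝ)^2) := by
    intro q hq
    rw [Finset.mem_Icc] at hq
    have hq1R : (1:ℝ) ≤ q := by exact_mod_cast le_trans one_le_two hq.1
    have hq0 : (0:ℝ) < q := by linarith
    have hD := D_le (k := k) n q (le_trans one_le_two hq.1) hq.2
    have hc : (((q-1).choose s : ℕ) : ℝ) ≤ (q:ℝ)^s / (s.factorial : ℝ) := by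
      refine le_trans (Nat.choose_le_pow_div s (q-1)) ?_
      have hb : (((q-1):ℕ):ℝ) ≤ (q:ℝ) := by exact_mod_cast Nat.sub_le q 1
      gcongr
    have hmul : (((q-1).choose s : ℕ) : ℝ) * (((((grid n k) ×ˢ (grid n k)).filter
          fun p => ∀ i, (q:ℤ) ∣ (p.2 i - p.1 i)).card : ℕ) : ℝ)
        ≤ ((q:ℝ)^s / (s.factorial : ℝ)) * (2*(n:ℝ)^2/(q:ℝ))^k :=
      mul_le_mul hc hD (by positivity) (by positivity)
    refine le_trans hmul ?_
    have key : (q:ℝ)^s * (q:ℝ)^2 ≤ (q:ℝ)^k := by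
      rw [← pow_add]
      exact pow_le_pow_right₀ hq1R (by exact hsk)
    have e1 : ((q:ℝ)^s / (s.factorial:ℝ)) * (2*(n:ℝ)^2/(q:ℝ))^k
        = (2^k * (n:ℝ)^(2*k)) * ((q:ℝ)^s / (q:ℝ)^k) / (s.factorial:ℝ) := by
      rw [div_pow, mul_pow, ← pow_mul]
      field_simp
    rw [e1, hM]
    have e2 : (q:ℝ)^s / (q:ℝ)^k ≤ 1/(q:ℝ)^2 := by
      rw [div_le_div_iff₀ (by positivity) (by positivity)]
      linarith [key]
    calc (2^k * (n:ℝ)^(2*k)) * ((q:ℝ)^s / (q:ℝ)^k) / (s.factorial:ℝ)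
        = (2^k * (n:ℝ)^(2*k) / (s.factorial:ℝ)) * ((q:ℝ)^s / (q:ℝ)^k) := by ring
      _ ≤ (2^k * (n:ℝ)^(2*k) / (s.factorial:ℝ)) * (1/(q:ℝ)^2) := by
          apply mul_le_mul_of_nonneg_left e2 (by positivity)
  have hcast : (({T : Finset (Fin k → ℝ) |
        (∀ x ∈ T, ∀ i, ∃ m : ℕ, 1 ≤ m ∧ m ≤ n ∧ x i = m) ∧
        T.card = (s+2) ∧ Collinear ℝ (↑T : Set (Fin k → ℝ))}.ncard : ℕ) : ℝ)
      ≤ ∑ q ∈ Finset.Icc 2 n, (((q-1).choose s : ℕ) : ℝ) * (((((grid n k) ×ˢ (grid n k)).filter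
          fun p => ∀ i, (q:ℤ) ∣ (p.2 i - p.1 i)).card : ℕ) : ℝ) := by
    calc _ ≤ ((∑ q ∈ Finset.Icc 2 n, (q-1).choose s *
          ((((grid n k) ×ˢ (grid n k)).filter
            fun p => ∀ i, (q:ℤ) ∣ (p.2 i - p.1 i)).card) : ℕ) : ℝ) :=
          Nat.cast_le.mpr (by
            have h1 := ncard_S_le n k (s+2) hr3
            have h2 := regroup n k (s+2) hr3
            simp only [Nat.add_sub_cancel] at h1 h2
            exact le_trans h1 h2)
      _ = _ := by push_cast; rfl
  have hsum : (∑ q ∈ Finset.Icc 2 n, (((q-1).choose s : ℕ) : ℝ) *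
      (((((grid n k) ×ˢ (grid n k)).filter
        fun p => ∀ i, (q:ℤ) ∣ (p.2 i - p.1 i)).card : ℕ) : ℝ)) ≤ M := by
    calc _ ≤ ∑ q ∈ Finset.Icc 2 n, M * (1/(q:ℝ)^2) := Finset.sum_le_sum hterm
      _ = M * ∑ q ∈ Finset.Icc 2 n, (1:ℝ)/(q:ℝ)^2 := by rw [Finset.mul_sum]
      _ ≤ M * 1 := by
          apply mul_le_mul_of_nonneg_left _ hMnn
          refine le_trans (sum_inv_sq_le n hn1) ?_
          have : (0:ℝ) ≤ 1/(n:ℝ) := by positivity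
          linarith
      _ = M := mul_one M
  have hfin : M ≤ (k : ℝ) * 2 ^ ((s+2) + k) / ((s+2).factorial : ℝ) * (n : ℝ) ^ (2 * k) := by
    rw [hM]
    have hrfac : ((s+2).factorial : ℝ) = (((s+2)*(s+1) : ℕ) : ℝ) * (s.factorial : ℝ) := by
      have hf : (s+2).factorial = (s+2)*(s+1)*s.factorial := by
        rw [Nat.factorial_succ, Nat.factorial_succ]
        ring
      rw [hf]; push_cast; ring
    have hnat : (s+2)*(s+1) ≤ k * 2^(s+2) := by
      have hknat : s+2 ≤ k := hsk
      have h2p : s+1 ≤ 2^(s+2) :=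
        le_of_lt (lt_of_lt_of_le (Nat.lt_two_pow_self (n := s+1)) (Nat.pow_le_pow_right (by norm_num) (Nat.le_succ _)))
      calc (s+2)*(s+1) ≤ k*(s+1) := Nat.mul_le_mul_right _ hknat
        _ ≤ k * 2^(s+2) := Nat.mul_le_mul_left _ h2p
    have hnatR : (((s+2)*(s+1) : ℕ) : ℝ) ≤ (k:ℝ) * 2^(s+2) := by
      push_cast
      exact_mod_cast hnat
    have hrfacpos : (0:ℝ) < ((s+2).factorial : ℝ) := by exact_mod_cast (s+2).factorial_pos
    have hscal : (2:ℝ)^k / (s.factorial:ℝ) ≤ (k:ℝ) * 2^((s+2)+k) / ((s+2).factorial:ℝ) := by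
      rw [div_le_div_iff₀ hfacpos hrfacpos, hrfac]
      calc (2:ℝ)^k * ((((s+2)*(s+1) : ℕ) : ℝ) * (s.factorial:ℝ))
          = (((s+2)*(s+1) : ℕ) : ℝ) * (2^k * (s.factorial:ℝ)) := by ring
        _ ≤ ((k:ℝ) * 2^(s+2)) * (2^k * (s.factorial:ℝ)) := by
            apply mul_le_mul_of_nonneg_right hnatR (by positivity)
        _ = (k:ℝ) * 2^((s+2)+k) * (s.factorial:ℝ) := by
            rw [pow_add]
            ring
    calc 2^k * (n:ℝ)^(2*k) / (s.factorial:ℝ)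
        = (2^k/(s.factorial:ℝ)) * (n:ℝ)^(2*k) := by ring
      _ ≤ ((k:ℝ) * 2^((s+2)+k) / ((s+2).factorial:ℝ)) * (n:ℝ)^(2*k) := by
          apply mul_le_mul_of_nonneg_right hscal (by positivity)
  exact le_trans hcast (le_trans hsum hfin)
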